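/- Let f ∈ F_4, let J = [i/4^n, (i+1)/4^n] be a standard 4-adic interval on which f is affine, and suppose the image f(J) = [j/4^m, (j+1)/4^m] is also a standard 4-adic interval. Then J and f(J) have the same type, i.e. i ≡ j (mod 3). -/

import Mathlib

/-- The group of orientation-preserving homeomorphisms of `[0,1]`, modeled as
order-isomorphisms of the unit interval. -/
abbrev Homeo := unitInterval ≃o unitInterval

/-- A 4-adic rational, i.e. an element of `ℤ[1/4]`. -/
def FourAdic (x : ℝ) : Prop := ∃ (a : ℤ) (k : ℕ), x = (a : ℝ) / 4 ^ k

/-- Membership in the group `F₄`: `f` is piecewise linear with finitely many breakpoints,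
all breakpoints are 4-adic rationals, and all slopes are integer powers of `4`. -/
def IsF4 (f : Homeo) : Prop :=
  ∃ s : Finset ℝ, (∀ q ∈ s, FourAdic q) ∧
    ∀ x : unitInterval, (x : ℝ) ∉ s →
      ∃ (m : ℤ) (cst ε : ℝ), 0 < ε ∧
        ∀ y : unitInterval, |(y : ℝ) - (x : ℝ)| < ε →
          ((f y : unitInterval) : ℝ) = 4 ^ m * (y : ℝ) + cst




def Div3R (x : ℝ) : Prop := ∃ (a : ℤ) (k : ℕ), x = 3 * (a : ℝ) / 4 ^ k

lemma Div3R.add {x y : ℝ} (hx : Div3R x) (hy : Div3R y) : Div3R (x + y) := by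
  obtain ⟨a, k, rfl⟩ := hx
  obtain ⟨b, l, rfl⟩ := hy
  refine ⟨a * 4 ^ l + b * 4 ^ k, k + l, ?_⟩
  field_simp; push_cast; ring

lemma Div3R.mul_fourAdic {x y : ℝ} (hx : Div3R x) (hy : FourAdic y) : Div3R (x * y) := by
  obtain ⟨a, k, rfl⟩ := hx
  obtain ⟨b, l, rfl⟩ := hy
  exact ⟨a * b, k + l, by field_simp; push_cast; ring⟩

lemma zpow_eq_nat_div (p : ℤ) : ∃ (A k : ℕ), (4:ℝ) ^ p = (4:ℝ) ^ A / 4 ^ k := by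
  refine ⟨(p + (max (-p) 0).toNat).toNat, (max (-p) 0).toNat, ?_⟩
  have h1 : (0:ℤ) ≤ p + (max (-p) 0).toNat := by
    have := Int.self_le_toNat (max (-p) 0)
    have := le_max_left (-p) (0:ℤ)
    omega
  have h2 : ((p + (max (-p) 0).toNat).toNat : ℤ) = p + (max (-p) 0).toNat := Int.toNat_of_nonneg h1
  have h4 : (4:ℝ) ≠ 0 := by norm_num
  rw [eq_div_iff (by positivity), ← zpow_natCast (4:ℝ) (p + (max (-p) 0).toNat).toNat, h2,
    ← zpow_natCast (4:ℝ) (max (-p) 0).toNat, ← zpow_add₀ h4]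

lemma Div3R.pow_sub (p q : ℤ) : Div3R ((4:ℝ) ^ p - 4 ^ q) := by
  obtain ⟨A, k, hA⟩ := zpow_eq_nat_div p
  obtain ⟨B, l, hB⟩ := zpow_eq_nat_div q
  have h4mod : (4:ℤ) ≡ 1 [ZMOD 3] := by decide
  have m1 : (4:ℤ) ^ A * 4 ^ l ≡ 1 ^ A * 1 ^ l [ZMOD 3] := (h4mod.pow A).mul (h4mod.pow l)
  have m2 : (4:ℤ) ^ k * 4 ^ B ≡ 1 ^ k * 1 ^ B [ZMOD 3] := (h4mod.pow k).mul (h4mod.pow B)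
  have hdvd : (3:ℤ) ∣ 4 ^ A * 4 ^ l - 4 ^ k * 4 ^ B := (by simpa using m2.trans (by simpa using m1.symm) : (4:ℤ) ^ k * 4 ^ B ≡ 4 ^ A * 4 ^ l [ZMOD 3]).dvd
  obtain ⟨d, hd⟩ := hdvd
  refine ⟨d, k + l, ?_⟩
  have hk : ((4:ℝ)) ^ k ≠ 0 := by positivity
  have hl : ((4:ℝ)) ^ l ≠ 0 := by positivity
  rw [hA, hB, pow_add, div_sub_div _ _ hk hl]
  congr 1
  have hd' : ((4:ℝ) ^ A * 4 ^ l - 4 ^ k * 4 ^ B) = 3 * d := by exact_mod_cast congrArg (Int.cast : ℤ → ℝ) hd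
  linarith [hd']



/-- Two affine maps agreeing at two distinct points are equal. -/
lemma affine_match {a₁ c₁ a₂ c₂ z₁ z₂ : ℝ} (hz : z₁ ≠ z₂)
    (h1 : a₁ * z₁ + c₁ = a₂ * z₁ + c₂) (h2 : a₁ * z₂ + c₁ = a₂ * z₂ + c₂) :
    a₁ = a₂ ∧ c₁ = c₂ := by
  have ha : a₁ = a₂ := by
    have : a₁ * (z₁ - z₂) = a₂ * (z₁ - z₂) := by ring_nf; linarith
    have hz' : z₁ - z₂ ≠ 0 := sub_ne_zero.mpr hz
    exact mul_right_cancel₀ hz' this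
  exact ⟨ha, by rw [ha] at h1; linarith⟩

lemma propagate (f : Homeo) (s : Finset ℝ)
    (hs : ∀ x : unitInterval, (x : ℝ) ∉ s →
      ∃ (m : ℤ) (cst ε : ℝ), 0 < ε ∧
        ∀ y : unitInterval, |(y : ℝ) - (x : ℝ)| < ε →
          ((f y : unitInterval) : ℝ) = 4 ^ m * (y : ℝ) + cst)
    (l r : ℝ) (hl : 0 ≤ l) (hr : r ≤ 1) (hlr : l < r)
    (hno : ∀ q ∈ s, q ∉ Set.Ioo l r) :
    ∃ (p : ℤ) (c : ℝ), ∀ y : unitInterval, (y : ℝ) ∈ Set.Icc l r →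
      ((f y : unitInterval) : ℝ) = 4 ^ p * (y : ℝ) + c := by
  have hsub : Set.Ioo l r ⊆ Set.Icc (0:ℝ) 1 := fun z hz =>
    ⟨hl.trans hz.1.le, hz.2.le.trans hr⟩
  -- the midpoint
  set w : ℝ := (l + r) / 2 with hw
  have hwmem : w ∈ Set.Ioo l r := ⟨by simp [hw]; linarith, by simp [hw]; linarith⟩
  have hw01 := hsub hwmem
  obtain ⟨p, c, ε, hε, hloc⟩ := hs ⟨w, hw01⟩ (fun h => hno w h hwmem)
  refine ⟨p, c, ?_⟩
  -- the set where f is locally given by `4^p * y + c`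
  set T : Set ℝ := {y | y ∈ Set.Ioo l r ∧ ∃ δ > 0, ∀ z : unitInterval,
    |(z : ℝ) - y| < δ → ((f z : unitInterval) : ℝ) = 4 ^ p * (z : ℝ) + c} with hT
  have hTopen : IsOpen T := by
    rw [Metric.isOpen_iff]
    rintro y ⟨⟨hyl, hyr⟩, δ, hδ, hy⟩
    refine ⟨min δ (min (y - l) (r - y)), lt_min hδ (lt_min (by linarith) (by linarith)), ?_⟩
    intro y' hy'
    rw [Real.ball_eq_Ioo] at hy'
    have h1 : |y' - y| < δ := by
      rw [abs_lt]; constructor <;>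
      · have := hy'.1; have := hy'.2
        have h := min_le_left δ (min (y - l) (r - y)); nlinarith [min_le_left δ (min (y-l) (r-y))]
    have h2 : y' ∈ Set.Ioo l r := by
      have hm := min_le_right δ (min (y - l) (r - y))
      have hm1 := (min_le_left (y - l) (r - y))
      have hm2 := (min_le_right (y - l) (r - y))
      constructor
      · have := hy'.1; nlinarith
      · have := hy'.2; nlinarith
    refine ⟨h2, δ - |y' - y|, by linarith, ?_⟩
    intro z hz
    apply hy
    calc |(z:ℝ) - y| ≤ |(z:ℝ) - y'| + |y' - y| := abs_sub_le _ _ _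
      _ < (δ - |y' - y|) + |y' - y| := by linarith
      _ = δ := by ring
  have hwT : w ∈ T := ⟨hwmem, ε, hε, fun z hz => hloc z hz⟩
  have hclos : closure T ∩ Set.Ioo l r ⊆ T := by
    rintro y ⟨hyc, hymem⟩
    have hy01 := hsub hymem
    obtain ⟨p₂, c₂, ε₂, hε₂, hloc₂⟩ := hs ⟨y, hy01⟩ (fun h => hno y h hymem)
    obtain ⟨y', hy'T, hy'd⟩ := Metric.mem_closure_iff.mp hyc (ε₂ / 2) (by linarith)
    rw [Real.dist_eq] at hy'd
    obtain ⟨hy'mem, δ', hδ', hy'⟩ := hy'T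
    have habs : |y' - y| < ε₂ / 2 := by rwa [abs_sub_comm]
    have hy'01 := hsub hy'mem
    -- two test points near y'
    set d : ℝ := min (δ' / 2) (min (ε₂ / 4) ((1 - y') / 2)) with hd
    have h1y' : y' < 1 := lt_of_lt_of_le hy'mem.2 hr
    have hdpos : 0 < d := by
      apply lt_min (by linarith) (lt_min (by linarith) (by linarith))
    have hz2mem : y' + d ∈ Set.Icc (0:ℝ) 1 := by
      constructor
      · have := hy'01.1; linarith
      · have hm := min_le_right (δ' / 2) (min (ε₂ / 4) ((1 - y') / 2))
        have hm2 := min_le_right (ε₂ / 4) ((1 - y') / 2)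
        have : d ≤ (1 - y') / 2 := le_trans hm hm2
        linarith
    have hdδ : d ≤ δ' / 2 := min_le_left _ _
    have hdε : d ≤ ε₂ / 4 := le_trans (min_le_right _ _) (min_le_left _ _)
    set Z1 : unitInterval := ⟨y', hy'01⟩
    set Z2 : unitInterval := ⟨y' + d, hz2mem⟩
    have e1a : ((f Z1 : unitInterval) : ℝ) = 4 ^ p * y' + c := hy' Z1 (by simp [Z1]; linarith)
    have e2a : ((f Z2 : unitInterval) : ℝ) = 4 ^ p * (y' + d) + c := hy' Z2 (by
      simp only [Z2]
      rw [show |(y' + d) - y'| = d by rw [show (y' + d) - y' = d by ring]; exact abs_of_pos hdpos]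
      linarith)
    have e1b : ((f Z1 : unitInterval) : ℝ) = 4 ^ p₂ * y' + c₂ := hloc₂ Z1 (by
      simp only [Z1]; exact lt_of_lt_of_le habs (by linarith))
    have e2b : ((f Z2 : unitInterval) : ℝ) = 4 ^ p₂ * (y' + d) + c₂ := hloc₂ Z2 (by
      simp only [Z2]
      calc |(y' + d) - y| ≤ |y' - y| + d := by
            rw [show (y' + d) - y = (y' - y) + d by ring]
            exact le_trans (abs_add_le _ _) (by rw [abs_of_pos hdpos])
        _ < ε₂ := by linarith)
    obtain ⟨hpp, hcc⟩ := affine_match (show y' ≠ y' + d by linarith)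
      (e1a.symm.trans e1b) (e2a.symm.trans e2b)
    refine ⟨hymem, ε₂, hε₂, ?_⟩
    intro z hz
    rw [hloc₂ z hz, ← hpp, ← hcc]
  have hall : Set.Ioo l r ⊆ T :=
    (isPreconnected_Ioo).subset_of_closure_inter_subset hTopen ⟨w, hwmem, hwT⟩
      (fun y hy => hclos ⟨hy.1, hy.2⟩)
  -- interior points
  have hIoo : ∀ y : unitInterval, (y : ℝ) ∈ Set.Ioo l r →
      ((f y : unitInterval) : ℝ) = 4 ^ p * (y : ℝ) + c := by
    intro y hy
    obtain ⟨-, δ, hδ, h⟩ := hall hy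
    exact h y (by simpa using hδ)
  -- extend to the closed interval by continuity
  intro y hy
  set g : unitInterval → ℝ := fun z => ((f z : unitInterval) : ℝ) - (4 ^ p * (z : ℝ) + c) with hg
  have hgc : Continuous g := by
    exact (continuous_subtype_val.comp f.continuous).sub
      ((continuous_const.mul continuous_subtype_val).add continuous_const)
  have hA : Subtype.val ⁻¹' (Set.Ioo l r) ⊆ g ⁻¹' ({0} : Set ℝ) := by
    intro z hz
    simp only [Set.mem_preimage, Set.mem_singleton_iff, hg]
    rw [hIoo z hz]; ring
  have hyc : y ∈ closure (Subtype.val ⁻¹' (Set.Ioo l r) : Set unitInterval) := by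
    rw [Metric.mem_closure_iff]
    intro ε' hε'
    set η : ℝ := min (ε' / 2) ((r - l) / 3) with hη
    have hηpos : 0 < η := lt_min (by linarith) (by linarith)
    set z : ℝ := min (max (y : ℝ) (l + η)) (r - η) with hz
    have hη3 : η ≤ (r - l) / 3 := min_le_right _ _
    have hzmem : z ∈ Set.Ioo l r := by
      constructor
      · apply lt_min
        · exact lt_of_lt_of_le (by linarith) (le_max_right _ _)
        · linarith
      · exact lt_of_le_of_lt (min_le_right _ _) (by linarith)
    have hz01 := hsub hzmem
    refine ⟨⟨z, hz01⟩, hzmem, ?_⟩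
    rw [Subtype.dist_eq, Real.dist_eq]
    have hyl : l ≤ (y : ℝ) := hy.1
    have hyr : (y : ℝ) ≤ r := hy.2
    have : |(y : ℝ) - z| ≤ η := by
      rw [abs_le]
      constructor
      · -- y - z ≥ -η  i.e.  z ≤ y + η
        have h1 : z ≤ max (y : ℝ) (l + η) := min_le_left _ _
        have h2 : max (y : ℝ) (l + η) ≤ (y : ℝ) + η := by
          apply max_le (by linarith) (by linarith)
        linarith
      · -- y - z ≤ η  i.e.  y - η ≤ z
        have h1 : (y : ℝ) - η ≤ max (y : ℝ) (l + η) := le_trans (by linarith) (le_max_left _ _)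
        have h2 : (y : ℝ) - η ≤ r - η := by linarith
        have : (y : ℝ) - η ≤ z := le_min h1 h2
        linarith
    exact lt_of_le_of_lt this (lt_of_le_of_lt (min_le_left _ _) (by linarith))
  have := closure_minimal hA (IsClosed.preimage hgc isClosed_singleton) hyc
  simp only [Set.mem_preimage, Set.mem_singleton_iff, hg] at this
  linarith


open Classical in
lemma key (f : Homeo) (s : Finset ℝ)
    (hsq : ∀ q ∈ s, FourAdic q)
    (hs : ∀ x : unitInterval, (x : ℝ) ∉ s →
      ∃ (m : ℤ) (cst ε : ℝ), 0 < ε ∧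
        ∀ y : unitInterval, |(y : ℝ) - (x : ℝ)| < ε →
          ((f y : unitInterval) : ℝ) = 4 ^ m * (y : ℝ) + cst) :
    ∀ (N : ℕ) (r : ℝ), 0 < r → r ≤ 1 →
      (s.filter (fun q => q ∈ Set.Ioo 0 r)).card ≤ N →
      ∀ (p : ℤ) (c w : ℝ), 0 ≤ w → w < r →
        (∀ y : unitInterval, (y : ℝ) ∈ Set.Ioo w r →
          ((f y : unitInterval) : ℝ) = 4 ^ p * (y : ℝ) + c) →
        Div3R c := by
  -- the "no breakpoints below r" case, used twice
  have base : ∀ (r : ℝ), 0 < r → r ≤ 1 →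
      (s.filter (fun q => q ∈ Set.Ioo 0 r)) = ∅ →
      ∀ (p : ℤ) (c w : ℝ), 0 ≤ w → w < r →
        (∀ y : unitInterval, (y : ℝ) ∈ Set.Ioo w r →
          ((f y : unitInterval) : ℝ) = 4 ^ p * (y : ℝ) + c) →
        Div3R c := by
    intro r hr0 hr1 hempty p c w hw0 hwr haff
    have hno : ∀ q ∈ s, q ∉ Set.Ioo 0 r := by
      intro q hq hmem
      have : q ∈ s.filter (fun q => q ∈ Set.Ioo 0 r) := Finset.mem_filter.mpr ⟨hq, hmem⟩
      rw [hempty] at this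
      exact absurd this (Finset.notMem_empty q)
    obtain ⟨p₂, c₂, h₂⟩ := propagate f s hs 0 r le_rfl hr1 hr0 hno
    -- match the two affine descriptions on two points of (w, r)
    have hz1 : w + (r - w) / 3 ∈ Set.Ioo w r := ⟨by linarith, by linarith⟩
    have hz2 : w + 2 * (r - w) / 3 ∈ Set.Ioo w r := ⟨by linarith, by linarith⟩
    have hsub : Set.Ioo w r ⊆ Set.Icc (0:ℝ) 1 := fun z hz => ⟨hw0.trans hz.1.le, hz.2.le.trans hr1⟩
    have hsub2 : Set.Ioo w r ⊆ Set.Icc 0 r := fun z hz => ⟨hw0.trans hz.1.le, hz.2.le⟩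
    set Z1 : unitInterval := ⟨w + (r - w) / 3, hsub hz1⟩
    set Z2 : unitInterval := ⟨w + 2 * (r - w) / 3, hsub hz2⟩
    have e1 := (haff Z1 hz1).symm.trans (h₂ Z1 (hsub2 hz1))
    have e2 := (haff Z2 hz2).symm.trans (h₂ Z2 (hsub2 hz2))
    obtain ⟨-, hcc⟩ := affine_match (show ((Z1:ℝ)) ≠ (Z2:ℝ) by simp [Z1, Z2]; intro h; linarith) e1 e2
    -- evaluate at 0
    have h0 : ((f ⊥ : unitInterval) : ℝ) = 4 ^ p₂ * ((⊥ : unitInterval) : ℝ) + c₂ :=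
      h₂ ⊥ ⟨le_rfl, hr0.le⟩
    rw [map_bot] at h0
    have : c₂ = 0 := by
      have hb : ((⊥ : unitInterval) : ℝ) = 0 := rfl
      rw [hb] at h0; linarith
    rw [hcc, this]
    exact ⟨0, 0, by norm_num⟩
  intro N
  induction N with
  | zero =>
    intro r hr0 hr1 hcard
    exact base r hr0 hr1 (Finset.card_eq_zero.mp (Nat.le_zero.mp hcard))
  | succ N ih =>
    intro r hr0 hr1 hcard p c w hw0 hwr haff
    by_cases hemp : (s.filter (fun q => q ∈ Set.Ioo 0 r)) = ∅
    · exact base r hr0 hr1 hemp p c w hw0 hwr haff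
    · set t := s.filter (fun q => q ∈ Set.Ioo 0 r) with ht
      have htne : t.Nonempty := Finset.nonempty_of_ne_empty hemp
      set q := t.max' htne with hq
      have hqt : q ∈ t := t.max'_mem htne
      have hqs : q ∈ s := (Finset.mem_filter.mp hqt).1
      have hqmem : q ∈ Set.Ioo 0 r := by
        have := (Finset.mem_filter.mp hqt).2; simpa using this
      have hq0 : 0 < q := hqmem.1
      have hqr : q < r := hqmem.2
      have hq1 : q ≤ 1 := hqr.le.trans hr1
      -- right piece (q, r)
      have hnoR : ∀ x ∈ s, x ∉ Set.Ioo q r := by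
        intro x hx hmem
        have hxt : x ∈ t := Finset.mem_filter.mpr ⟨hx, by
          simp only [Set.mem_Ioo]; exact ⟨hq0.trans hmem.1, hmem.2⟩⟩
        exact absurd (t.le_max' x hxt) (not_le.mpr hmem.1)
      obtain ⟨p₂, c₂, h₂⟩ := propagate f s hs q r hq0.le hr1 hqr hnoR
      -- match (p₂, c₂) with (p, c) on (max w q, r)
      set w' := max w q with hw'
      have hw'r : w' < r := max_lt hwr hqr
      have hz1 : w' + (r - w') / 3 ∈ Set.Ioo w' r := ⟨by linarith, by linarith⟩
      have hz2 : w' + 2 * (r - w') / 3 ∈ Set.Ioo w' r := ⟨by linarith, by linarith⟩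
      have hw'0 : 0 ≤ w' := le_trans hw0 (le_max_left _ _)
      have hsub : Set.Ioo w' r ⊆ Set.Icc (0:ℝ) 1 := fun z hz =>
        ⟨hw'0.trans hz.1.le, hz.2.le.trans hr1⟩
      have hsubw : Set.Ioo w' r ⊆ Set.Ioo w r := fun z hz =>
        ⟨lt_of_le_of_lt (le_max_left _ _) hz.1, hz.2⟩
      have hsubq : Set.Ioo w' r ⊆ Set.Icc q r := fun z hz =>
        ⟨(le_max_right w q).trans hz.1.le, hz.2.le⟩
      set Z1 : unitInterval := ⟨w' + (r - w') / 3, hsub hz1⟩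
      set Z2 : unitInterval := ⟨w' + 2 * (r - w') / 3, hsub hz2⟩
      have e1 := (haff Z1 (hsubw hz1)).symm.trans (h₂ Z1 (hsubq hz1))
      have e2 := (haff Z2 (hsubw hz2)).symm.trans (h₂ Z2 (hsubq hz2))
      obtain ⟨hpp, hcc⟩ := affine_match
        (show ((Z1:ℝ)) ≠ (Z2:ℝ) by simp [Z1, Z2]; intro h; linarith) e1 e2
      -- left piece (w'', q)
      set t' := s.filter (fun x => x ∈ Set.Ioo 0 q) with ht'
      have ht'sub : t' ⊆ t.erase q := by
        intro x hx
        obtain ⟨hxs, hxm⟩ := Finset.mem_filter.mp hx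
        simp only [Set.mem_Ioo] at hxm
        refine Finset.mem_erase.mpr ⟨by intro h; rw [h] at hxm; exact absurd hxm.2 (lt_irrefl q), ?_⟩
        exact Finset.mem_filter.mpr ⟨hxs, by simp only [Set.mem_Ioo]; exact ⟨hxm.1, hxm.2.trans hqr⟩⟩
      have hcard' : t'.card ≤ N := by
        have h1 : (t.erase q).card = t.card - 1 := Finset.card_erase_of_mem hqt
        have h2 := Finset.card_le_card ht'sub
        omega
      -- the left end of the left piece
      set w'' : ℝ := if h : t'.Nonempty then t'.max' h else 0 with hw''
      have hw''mem : 0 ≤ w'' ∧ w'' < q := by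
        by_cases h : t'.Nonempty
        · have hm : t'.max' h ∈ t' := t'.max'_mem h
          obtain ⟨-, hmm⟩ := Finset.mem_filter.mp hm
          simp only [Set.mem_Ioo] at hmm
          simp only [hw'', dif_pos h]
          exact ⟨hmm.1.le, hmm.2⟩
        · simp only [hw'', dif_neg h]
          exact ⟨le_rfl, hq0⟩
      have hnoL : ∀ x ∈ s, x ∉ Set.Ioo w'' q := by
        intro x hx hmem
        have hxt' : x ∈ t' := Finset.mem_filter.mpr ⟨hx, by
          simp only [Set.mem_Ioo]
          exact ⟨lt_of_le_of_lt hw''mem.1 hmem.1, hmem.2⟩⟩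
        have h : t'.Nonempty := ⟨x, hxt'⟩
        have := t'.le_max' x hxt'
        rw [hw''] at hmem
        simp only [dif_pos h] at hmem
        exact absurd this (not_le.mpr hmem.1)
      obtain ⟨p₁, c₁, h₁⟩ := propagate f s hs w'' q hw''mem.1 hq1 hw''mem.2 hnoL
      -- Div3R c₁ by induction
      have hd1 : Div3R c₁ := by
        refine ih q hq0 hq1 (by rw [← ht']; exact hcard') p₁ c₁ w'' hw''mem.1 hw''mem.2 ?_
        intro y hy
        exact h₁ y ⟨hy.1.le, hy.2.le⟩
      -- value at q from both sides
      have hq01 : q ∈ Set.Icc (0:ℝ) 1 := ⟨hq0.le, hq1⟩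
      set Q : unitInterval := ⟨q, hq01⟩
      have eL : ((f Q : unitInterval) : ℝ) = 4 ^ p₁ * q + c₁ := h₁ Q ⟨hw''mem.2.le, le_rfl⟩
      have eR : ((f Q : unitInterval) : ℝ) = 4 ^ p₂ * q + c₂ := h₂ Q ⟨le_rfl, hqr.le⟩
      -- conclude
      have hc : c = (4 ^ p₁ - 4 ^ p₂) * q + c₁ := by
        rw [hcc]; rw [eL] at eR; linarith
      rw [hc]
      exact (Div3R.mul_fourAdic (Div3R.pow_sub p₁ p₂) (hsq q hqs)).add hd1

theorem F4_preserves_type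
    (f : Homeo) (hf : IsF4 f)
    (i j n m : ℕ) (hi : i < 4 ^ n) (hj : j < 4 ^ m)
    (s cst : ℝ)
    (haff : ∀ x : unitInterval,
      (x : ℝ) ∈ Set.Icc ((i : ℝ) / 4 ^ n) (((i : ℝ) + 1) / 4 ^ n) →
        ((f x : unitInterval) : ℝ) = s * (x : ℝ) + cst)
    (hleft : s * ((i : ℝ) / 4 ^ n) + cst = (j : ℝ) / 4 ^ m)
    (hright : s * (((i : ℝ) + 1) / 4 ^ n) + cst = ((j : ℝ) + 1) / 4 ^ m) :
    i % 3 = j % 3 := by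
  classical
  obtain ⟨B, hBq, hB⟩ := hf
  have h4n : (0:ℝ) < 4 ^ n := by positivity
  have h4m : (0:ℝ) < 4 ^ m := by positivity
  -- the slope is 4 ^ (n - m)
  have hs4 : s = 4 ^ n / 4 ^ m := by
    have h1 : s * (((i:ℝ) + 1) / 4 ^ n) - s * ((i:ℝ) / 4 ^ n) = s / 4 ^ n := by
      field_simp; ring
    have h2 : s / 4 ^ n = 1 / 4 ^ m := by
      rw [← h1]
      have h3 : ((j:ℝ) + 1) / 4 ^ m - (j:ℝ) / 4 ^ m = 1 / 4 ^ m := by field_simp; ring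
      rw [← h3]; linarith
    rw [div_eq_div_iff h4n.ne' h4m.ne'] at h2
    rw [eq_div_iff h4m.ne']
    linarith
  set p : ℤ := (n : ℤ) - m with hp
  have hsp : s = (4:ℝ) ^ p := by
    rw [hs4, hp, zpow_sub₀ (by norm_num : (4:ℝ) ≠ 0), zpow_natCast, zpow_natCast]
  -- the constant lies in 3·ℤ[1/4]
  have hd : Div3R cst := by
    refine key f B hBq hB _ (((i:ℝ) + 1) / 4 ^ n) (by positivity) ?_ le_rfl
      p cst ((i:ℝ) / 4 ^ n) (by positivity) ?_ ?_
    · rw [div_le_one h4n]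
      have : (i:ℝ) + 1 ≤ 4 ^ n := by exact_mod_cast hi
      linarith
    · rw [div_lt_div_iff₀ h4n h4n]
      nlinarith
    · intro y hy
      rw [← hsp]
      exact haff y ⟨hy.1.le, hy.2.le⟩
  -- compute the constant
  have hcst : cst = ((j:ℝ) - i) / 4 ^ m := by
    have h1 : cst = (j:ℝ) / 4 ^ m - s * ((i:ℝ) / 4 ^ n) := by linarith
    rw [hs4] at h1
    rw [h1]
    field_simp
  obtain ⟨a, k, hak⟩ := hd
  rw [hcst] at hak
  have hre : ((j:ℝ) - i) * 4 ^ k = 3 * a * 4 ^ m := by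
    rw [div_eq_div_iff h4m.ne' (by positivity : ((4:ℝ) ^ k) ≠ 0)] at hak
    linarith
  have hz : ((j:ℤ) - i) * 4 ^ k = 3 * a * 4 ^ m := by exact_mod_cast hre
  have hdvd : (3:ℤ) ∣ ((j:ℤ) - i) * 4 ^ k := ⟨a * 4 ^ m, by rw [hz]; ring⟩
  have h3 : (3:ℤ) ∣ ((j:ℤ) - i) := by
    rcases Int.prime_three.dvd_mul.mp hdvd with h | h
    · exact h
    · exfalso
      have := Int.prime_three.dvd_of_dvd_pow h
      norm_num at this
  obtain ⟨d, hd3⟩ := h3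
  omega
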